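/- Let 1 ≤ p < q < ∞, let G be a topological group, and let π^p : G → O(ℓ_p) be a (BL) orthogonal representation without nonzero invariant vectors, with Mazur-conjugate representation π^q on ℓ_q. If H^1(G,π^q) = 0 and H^1(G,|π^p|) = 0, then H^1(G,π^p) = 0. -/

import Mathlib

open MeasureTheory ENNReal Filter Set

noncomputable section

/-- A strongly continuous representation of a topological group `G` by bijective
`ℂ`-linear isometries of a complex normed module `E` (the group `O(E)` of the paper). -/
structure IsomRep (G : Type*) [Group G] [TopologicalSpace G]
    (E : Type*) [AddCommGroup E] [SMul ℂ E] [Norm E] where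
  ρ : G → E → E
  map_add : ∀ (g : G) (x y : E), ρ g (x + y) = ρ g x + ρ g y
  map_smul : ∀ (g : G) (c : ℂ) (x : E), ρ g (c • x) = c • ρ g x
  norm_map : ∀ (g : G) (x : E), ‖ρ g x‖ = ‖x‖
  bijective : ∀ g : G, Function.Bijective (ρ g)
  map_mul' : ∀ (g h : G) (x : E), ρ (g * h) x = ρ g (ρ h x)
  map_one' : ∀ x : E, ρ 1 x = x
  strong_cont : ∀ (x : E) (g₀ : G) (ε : ℝ), 0 < ε →
    ∀ᶠ g in nhds g₀, ‖ρ g x - ρ g₀ x‖ < ε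

variable {G : Type*} [Group G] [TopologicalSpace G]
variable {E : Type*} [AddCommGroup E] [SMul ℂ E] [Norm E]

/-- Continuity of a map into a normed module, expressed via the norm. -/
def NormContinuous (b : G → E) : Prop :=
  ∀ (g₀ : G) (ε : ℝ), 0 < ε → ∀ᶠ g in nhds g₀, ‖b g - b g₀‖ < ε

/-- A continuous `1`-cocycle for the representation `π`. -/
def IsCocycle (π : IsomRep G E) (b : G → E) : Prop :=
  NormContinuous b ∧ ∀ g h : G, b (g * h) = b g + π.ρ g (b h)

/-- A `1`-coboundary. -/
def IsCoboundary (π : IsomRep G E) (b : G → E) : Prop :=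
  ∃ f : E, ∀ g : G, b g = f - π.ρ g f

/-- `H¹(G,π) = 0` : every continuous cocycle is a coboundary, equivalently every affine
isometric action with linear part `π` has a fixed point. -/
def H1Trivial (π : IsomRep G E) : Prop :=
  ∀ b : G → E, IsCocycle π b → IsCoboundary π b

/-- The set of `π(G)`-invariant vectors. -/
def InvariantVectors (π : IsomRep G E) : Set E := {x | ∀ g : G, π.ρ g x = x}

/-- The quotient (semi)norm of `x` modulo a subset `S` : the distance from `x` to `S`. -/
def quotNorm (S : Set E) (x : E) : ℝ := ⨅ w : S, ‖x - (w : E)‖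

/-- `π` admits a sequence of almost invariant unit vectors lying in the subset `S`. -/
def HasAIVin (π : IsomRep G E) (S : Set E) : Prop :=
  ∃ v : ℕ → E, (∀ n, v n ∈ S ∧ ‖v n‖ = 1) ∧
    ∀ Q : Set G, IsCompact Q → ∀ ε : ℝ, 0 < ε →
      ∃ N : ℕ, ∀ n ≥ N, ∀ g ∈ Q, ‖π.ρ g (v n) - v n‖ < ε

/-- The quotient representation of `π` on `E / E^{π(G)}` admits a sequence of almost
invariant unit vectors (expressed upstairs via the quotient norm). -/
def HasAIVquot (π : IsomRep G E) : Prop :=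
  ∃ v : ℕ → E, (∀ n, quotNorm (InvariantVectors π) (v n) = 1) ∧
    ∀ Q : Set G, IsCompact Q → ∀ ε : ℝ, 0 < ε →
      ∃ N : ℕ, ∀ n ≥ N, ∀ g ∈ Q, quotNorm (InvariantVectors π) (π.ρ g (v n) - v n) < ε

/-- Kazhdan's property (T) : every unitary representation of `G` (on a complex Hilbert space)
with almost invariant vectors has a nonzero invariant vector. -/
def HasKazhdanT (G : Type*) [Group G] [TopologicalSpace G] : Prop :=
  ∀ (H : Type) [NormedAddCommGroup H] [InnerProductSpace ℂ H] [CompleteSpace H],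
    ∀ π : IsomRep G H,
      (∀ Q : Set G, IsCompact Q → ∀ ε : ℝ, 0 < ε →
        ∃ v : H, ‖v‖ = 1 ∧ ∀ g ∈ Q, ‖π.ρ g v - v‖ < ε) →
      ∃ v : H, v ≠ 0 ∧ ∀ g : G, π.ρ g v = v

/-! ### Sequence spaces `ℓ_p` -/

/-- `ℓ_p(X)`, the space of `p`-summable complex families over `X`. -/
abbrev lpSeq (X : Type*) (p : ℝ) := lp (fun _ : X => ℂ) (ENNReal.ofReal p)

/-- Property `(F_{ℓ_p})` : every affine isometric action of `G` on `ℓ_p` has a fixed point. -/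
def HasFlp (G : Type*) [Group G] [TopologicalSpace G] (p : ℝ) : Prop :=
  ∀ π : IsomRep G (lpSeq ℕ p), H1Trivial π

/-- The fixed-point spectrum `𝓕_{ℓ^∞}(G)` of `G` for actions on the spaces `ℓ_p`. -/
def lpSpectrum (G : Type*) [Group G] [TopologicalSpace G] : Set ℝ :=
  {p : ℝ | 1 ≤ p ∧ HasFlp G p}

/-! ### `L_p(X,μ)` spaces and (BL) representations -/

variable {X : Type*} [MeasurableSpace X]

/-- `L_p(X,μ)` with a real exponent `p`. -/
abbrev LpSp (μ : Measure X) (p : ℝ) := Lp ℂ (ENNReal.ofReal p) μ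

/-- `U` is an isometry of Banach–Lamperti form with data `(h, φ)` :
`U f (x) = h x · (d(φ_*μ)/dμ (x))^{1/p} · f (φ x)`, with `|h| = 1` a.e. and `φ` a
measure-class-preserving bijection of `X`. -/
def IsBLIsometry (μ : Measure X) (p : ℝ) (U : LpSp μ p → LpSp μ p)
    (h : X → ℂ) (φ : X → X) : Prop :=
  Function.Bijective φ ∧ Measurable φ ∧
  μ.map φ ≪ μ ∧ μ ≪ μ.map φ ∧
  (∀ᵐ x ∂μ, ‖h x‖ = 1) ∧
  ∀ f : LpSp μ p, (U f : X → ℂ) =ᵐ[μ]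
    fun x => h x * ((((μ.map φ).rnDeriv μ x).toReal ^ (1 / p) : ℝ) : ℂ) * (f : X → ℂ) (φ x)

/-- `U` is a measure-preserving isometry of Banach–Lamperti form with data `(h, φ)` :
`U f (x) = h x · f (φ x)` with `|h| = 1` a.e. and `φ` a measure-preserving bijection. -/
def IsBLmpIsometry (μ : Measure X) (p : ℝ) (U : LpSp μ p → LpSp μ p)
    (h : X → ℂ) (φ : X → X) : Prop :=
  Function.Bijective φ ∧ MeasurePreserving φ μ μ ∧
  (∀ᵐ x ∂μ, ‖h x‖ = 1) ∧
  ∀ f : LpSp μ p, (U f : X → ℂ) =ᵐ[μ] fun x => h x * (f : X → ℂ) (φ x)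

/-- A (BL) orthogonal representation of `G` together with all its Mazur conjugates :
for every `q ∈ [1,∞)` a strongly continuous isometric representation on `L_q(X,μ)`,
all given by the Banach–Lamperti formula with the *same* data `(h_g, φ_g)` (this is
exactly the family `(π^q)_q` of conjugates of a (BL) representation by the Mazur maps). -/
structure BLFamily (G : Type*) [Group G] [TopologicalSpace G]
    {X : Type*} [MeasurableSpace X] (μ : Measure X) where
  h : G → X → ℂ
  φ : G → X → X
  rep : (q : ℝ) → 1 ≤ q → IsomRep G (LpSp μ q)
  isBL : ∀ (q : ℝ) (hq : 1 ≤ q) (g : G), IsBLIsometry μ q ((rep q hq).ρ g) (h g) (φ g)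

/-- A measure-preserving (BL) orthogonal representation together with all its Mazur
conjugates, as in `BLFamily`. -/
structure BLmpFamily (G : Type*) [Group G] [TopologicalSpace G]
    {X : Type*} [MeasurableSpace X] (μ : Measure X) where
  h : G → X → ℂ
  φ : G → X → X
  rep : (q : ℝ) → 1 ≤ q → IsomRep G (LpSp μ q)
  isBL : ∀ (q : ℝ) (hq : 1 ≤ q) (g : G), IsBLmpIsometry μ q ((rep q hq).ρ g) (h g) (φ g)

/-- The fixed-point spectrum `𝓕_{L^∞(X,μ)}(G,π)` of a (BL) representation and its
Mazur conjugates. -/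
def BLFamily.spectrum {G : Type*} [Group G] [TopologicalSpace G]
    {X : Type*} [MeasurableSpace X] {μ : Measure X} (F : BLFamily G μ) : Set ℝ :=
  {q : ℝ | ∃ hq : 1 ≤ q, H1Trivial (F.rep q hq)}

/-- The fixed-point spectrum for a measure-preserving family. -/
def BLmpFamily.spectrum {G : Type*} [Group G] [TopologicalSpace G]
    {X : Type*} [MeasurableSpace X] {μ : Measure X} (F : BLmpFamily G μ) : Set ℝ :=
  {q : ℝ | ∃ hq : 1 ≤ q, H1Trivial (F.rep q hq)}

/-- Ergodicity of the underlying action `(φ_g)_{g ∈ G}` on `(X,μ)` : every measurable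
a.e.-invariant set is null or conull. -/
def ErgodicFamily {G : Type*} {X : Type*} [MeasurableSpace X] (μ : Measure X)
    (φ : G → X → X) : Prop :=
  ∀ A : Set X, MeasurableSet A → (∀ g : G, μ (symmDiff (φ g ⁻¹' A) A) = 0) →
    μ A = 0 ∨ μ Aᶜ = 0

/-- `w ∈ L_{q'}(X,μ)` (where `q'` is the conjugate exponent of `q`) is an invariant vector
of the contragredient representation `π^*`, expressed through the duality pairing. -/
def IsDualInvariant (μ : Measure X) (q : ℝ) (π : IsomRep G (LpSp μ q)) (w : X → ℂ) : Prop :=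
  MemLp w (ENNReal.ofReal (q / (q - 1))) μ ∧
  ∀ (g : G) (f : LpSp μ q),
    ∫ x, (π.ρ g f : X → ℂ) x * w x ∂μ = ∫ x, (f : X → ℂ) x * w x ∂μ

/-- The complement `L_q(X,μ)'(π)` : the annihilator of the invariant vectors of the
contragredient representation. -/
def LpComplement (μ : Measure X) (q : ℝ) (π : IsomRep G (LpSp μ q)) : Set (LpSp μ q) :=
  {f | ∀ w : X → ℂ, IsDualInvariant μ q π w → ∫ x, (f : X → ℂ) x * w x ∂μ = 0}

/-- The Mazur map `M_{p,q} : f = sgn(f)|f| ↦ sgn(f)|f|^{p/q}`, at the level of functions. -/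
def mazurFn (p q : ℝ) (f : X → ℂ) : X → ℂ :=
  fun x => f x * (((‖f x‖ : ℝ) : ℂ) ^ ((p / q - 1 : ℝ) : ℂ))

/-! ### `L_q(0,1)` -/

/-- Lebesgue measure on `[0,1]`. -/
abbrev mu01 : Measure ℝ := volume.restrict (Set.Icc (0 : ℝ) 1)

/-- `L_q(0,1) = L_q([0,1],λ)`. -/
abbrev Lp01 (q : ℝ) := LpSp mu01 q

/-- Property `(F_{L_q(0,1)})`. -/
def HasFLp01 (G : Type*) [Group G] [TopologicalSpace G] (q : ℝ) : Prop :=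
  ∀ π : IsomRep G (Lp01 q), H1Trivial π

/-- The fixed-point spectrum `𝓕_{L^∞(0,1)}(G)`. -/
def L01Spectrum (G : Type*) [Group G] [TopologicalSpace G] : Set ℝ :=
  {q : ℝ | 1 ≤ q ∧ HasFLp01 G q}

/-- The diameter of a subset of a normed module. -/
def normDiam (S : Set E) : ℝ := sSup {r : ℝ | ∃ x ∈ S, ∃ y ∈ S, ‖x - y‖ = r}

/-! ### extra defs -/
section Extra

variable {G : Type*} [Group G] [TopologicalSpace G]

/-- `w ∈ ℓ_{p'}(X)` is an invariant vector of the contragredient representation `π^*`,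
expressed through the duality pairing `⟨f,w⟩ = ∑ f x · w x`. -/
def lpDualInvariant (p : ℝ) {X : Type*} (π : IsomRep G (lpSeq X p)) (w : X → ℂ) : Prop :=
  Memℓp w (ENNReal.ofReal (p / (p - 1))) ∧
  ∀ (g : G) (f : lpSeq X p),
    ∑' x, (π.ρ g f : ∀ _ : X, ℂ) x * w x = ∑' x, (f : ∀ _ : X, ℂ) x * w x

/-- The complement `ℓ_p'(π)`, the annihilator of the invariant vectors of the
contragredient representation. -/
def lpComplement (p : ℝ) {X : Type*} (π : IsomRep G (lpSeq X p)) : Set (lpSeq X p) :=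
  {f | ∀ w : X → ℂ, lpDualInvariant p π w → ∑' x, (f : ∀ _ : X, ℂ) x * w x = 0}

/-- Property `(T_{ℓ_p})` : for every orthogonal representation `π` of `G` on `ℓ_p`, the
restriction of `π` to `ℓ_p'(π)` (to `ℓ_1/ℓ_1^{π(G)}` when `p = 1`) has no sequence of
almost invariant vectors. -/
def HasTlp (G : Type*) [Group G] [TopologicalSpace G] (p : ℝ) : Prop :=
  ∀ π : IsomRep G (lpSeq ℕ p),
    (1 < p → ¬ HasAIVin π (lpComplement p π)) ∧ (p = 1 → ¬ HasAIVquot π)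

/-- A (BL) orthogonal representation of `G` on `ℓ_p(X)` together with all its Mazur
conjugates : representations on every `ℓ_q(X)` given by the Banach–Lamperti formula
`(π^q(g) f)(x) = h_g(x) · f(σ_g(x))` with the *same* data `(h_g, σ_g)`, where `σ_g` is a
permutation of `X` and `|h_g| ≡ 1`. -/
structure SeqBLFamily (G : Type*) [Group G] [TopologicalSpace G] (X : Type*) where
  h : G → X → ℂ
  σ : G → Equiv.Perm X
  habs : ∀ (g : G) (x : X), ‖h g x‖ = 1
  rep : (q : ℝ) → 1 ≤ q → IsomRep G (lpSeq X q)
  formula : ∀ (q : ℝ) (hq : 1 ≤ q) (g : G) (f : lpSeq X q) (x : X),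
    ((rep q hq).ρ g f : ∀ _ : X, ℂ) x = h g x * (f : ∀ _ : X, ℂ) (σ g x)

/-- The fixed-point spectrum `𝓕_{ℓ^∞}(G,π)` of a (BL) representation on `ℓ_p(X)` and its
Mazur conjugates. -/
def SeqBLFamily.spectrum {G : Type*} [Group G] [TopologicalSpace G] {X : Type*}
    (F : SeqBLFamily G X) : Set ℝ :=
  {q : ℝ | ∃ hq : 1 ≤ q, H1Trivial (F.rep q hq)}

/-- The orbit of a point of `X` under the action associated to a (BL) family. -/
def SeqBLFamily.orbit {G : Type*} [Group G] [TopologicalSpace G] {X : Type*}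
    (F : SeqBLFamily G X) (x : X) : Set X :=
  ⋃ g : G, {F.σ g x}

variable {E : Type*} [AddCommGroup E] [SMul ℂ E] [Norm E]

/-- Continuity of a two-variable map into a normed module. -/
def NormContinuous2 (c : G → G → E) : Prop :=
  ∀ (x : G × G) (ε : ℝ), 0 < ε → ∀ᶠ y in nhds x, ‖c y.1 y.2 - c x.1 x.2‖ < ε

/-- A continuous inhomogeneous `2`-cocycle for `π`. -/
def Is2Cocycle (π : IsomRep G E) (c : G → G → E) : Prop :=
  NormContinuous2 c ∧ ∀ g₁ g₂ g₃ : G,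
    π.ρ g₁ (c g₂ g₃) - c (g₁ * g₂) g₃ + c g₁ (g₂ * g₃) - c g₁ g₂ = 0

/-- An inhomogeneous `2`-coboundary for `π`. -/
def Is2Coboundary (π : IsomRep G E) (c : G → G → E) : Prop :=
  ∃ b : G → E, NormContinuous b ∧
    ∀ g₁ g₂ : G, c g₁ g₂ = π.ρ g₁ (b g₂) - b (g₁ * g₂) + b g₁

/-- `H²(G,π)` is reduced : the space of `2`-coboundaries is closed in the space of
`2`-cocycles for the topology of uniform convergence on finite subsets. -/
def H2Reduced (π : IsomRep G E) : Prop :=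
  ∀ c : G → G → E, Is2Cocycle π c →
    (∀ (S : Finset (G × G)) (ε : ℝ), 0 < ε →
      ∃ c' : G → G → E, Is2Coboundary π c' ∧ ∀ s ∈ S, ‖c s.1 s.2 - c' s.1 s.2‖ < ε) →
    Is2Coboundary π c

/-- `G` is finitely presented. -/
def IsFinitelyPresented (G : Type*) [Group G] : Prop :=
  ∃ (n : ℕ) (rels : Set (FreeGroup (Fin n))), rels.Finite ∧ Nonempty (G ≃* PresentedGroup rels)

end Extra


namespace H1lpAux

/-- Mazur-type pointwise map `z ↦ sgn z * |z| ^ θ`. -/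
def Mz (θ : ℝ) (z : ℂ) : ℂ := z * ((‖z‖ ^ (θ - 1) : ℝ) : ℂ)

lemma Mz_norm {θ : ℝ} (hθ0 : 0 < θ) (z : ℂ) : ‖Mz θ z‖ = ‖z‖ ^ θ := by
  rcases eq_or_ne z 0 with rfl | hz
  · simp [Mz, Real.zero_rpow hθ0.ne']
  · have h0 : (0:ℝ) < ‖z‖ := norm_pos_iff.mpr hz
    rw [Mz, norm_mul, Complex.norm_real, Real.norm_eq_abs,
      abs_of_nonneg (Real.rpow_nonneg h0.le _)]
    rw [show ‖z‖ * ‖z‖ ^ (θ - 1) = ‖z‖ ^ (1:ℝ) * ‖z‖ ^ (θ - 1) by rw [Real.rpow_one],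
      ← Real.rpow_add h0]
    ring_nf

lemma Mz_unim {θ : ℝ} {lam : ℂ} (hl : ‖lam‖ = 1) (z : ℂ) :
    Mz θ (lam * z) = lam * Mz θ z := by
  unfold Mz
  rw [norm_mul, hl, one_mul]; ring

private lemma Mz_diff_le_aux {θ : ℝ} (hθ0 : 0 < θ) (hθ1 : θ ≤ 1) {a b : ℂ}
    (hba : ‖b‖ ≤ ‖a‖) : ‖Mz θ a - Mz θ b‖ ≤ 5 * ‖a - b‖ ^ θ := by
  rcases eq_or_ne a b with rfl | hne
  · simp [Real.zero_rpow hθ0.ne']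
  set δ : ℝ := ‖a - b‖ with hδ
  have hδ0 : 0 < δ := by
    rw [hδ]; exact norm_pos_iff.mpr (sub_ne_zero.mpr hne)
  have hδθ0 : (0:ℝ) ≤ δ ^ θ := Real.rpow_nonneg hδ0.le _
  by_cases hB : ‖b‖ ≤ 2 * δ
  · -- small case
    have ha3 : ‖a‖ ≤ 3 * δ := by
      calc ‖a‖ = ‖b + (a - b)‖ := by congr 1; ring
        _ ≤ ‖b‖ + ‖a - b‖ := norm_add_le _ _
        _ ≤ 2 * δ + δ := by rw [← hδ] at *; linarith
        _ = 3 * δ := by ring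
    have h1 : ‖Mz θ a - Mz θ b‖ ≤ ‖a‖ ^ θ + ‖b‖ ^ θ := by
      calc ‖Mz θ a - Mz θ b‖ ≤ ‖Mz θ a‖ + ‖Mz θ b‖ := norm_sub_le _ _
        _ = ‖a‖ ^ θ + ‖b‖ ^ θ := by rw [Mz_norm hθ0, Mz_norm hθ0]
    have h2 : ‖a‖ ^ θ ≤ 3 * δ ^ θ := by
      calc ‖a‖ ^ θ ≤ (3 * δ) ^ θ := Real.rpow_le_rpow (norm_nonneg _) ha3 hθ0.le
        _ = 3 ^ θ * δ ^ θ := Real.mul_rpow (by norm_num) hδ0.le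
        _ ≤ 3 * δ ^ θ := by
            have : (3:ℝ) ^ θ ≤ 3 := by
              calc (3:ℝ) ^ θ ≤ (3:ℝ) ^ (1:ℝ) :=
                Real.rpow_le_rpow_of_exponent_le (by norm_num) hθ1
                _ = 3 := Real.rpow_one 3
            nlinarith
    have h3 : ‖b‖ ^ θ ≤ 2 * δ ^ θ := by
      calc ‖b‖ ^ θ ≤ (2 * δ) ^ θ := Real.rpow_le_rpow (norm_nonneg _) hB hθ0.le
        _ = 2 ^ θ * δ ^ θ := Real.mul_rpow (by norm_num) hδ0.le
        _ ≤ 2 * δ ^ θ := by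
            have : (2:ℝ) ^ θ ≤ 2 := by
              calc (2:ℝ) ^ θ ≤ (2:ℝ) ^ (1:ℝ) :=
                Real.rpow_le_rpow_of_exponent_le (by norm_num) hθ1
                _ = 2 := Real.rpow_one 2
            nlinarith
    linarith
  · -- smooth case
    push_neg at hB
    have hb0 : (0:ℝ) < ‖b‖ := lt_trans (by linarith) hB
    have ha0 : (0:ℝ) < ‖a‖ := lt_of_lt_of_le hb0 hba
    have ha2δ : 2 * δ ≤ ‖a‖ := le_trans hB.le hba
    set r := ‖a‖
    set s := ‖b‖
    have hθn : θ - 1 ≤ 0 := by linarith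
    have hdecomp : Mz θ a - Mz θ b
        = (a - b) * ((r ^ (θ - 1) : ℝ) : ℂ)
          + b * (((r ^ (θ - 1) : ℝ) : ℂ) - ((s ^ (θ - 1) : ℝ) : ℂ)) := by
      unfold Mz; ring
    have hpow2δ : (2 * δ) ^ (θ - 1) ≤ δ ^ (θ - 1) := by
      calc (2 * δ) ^ (θ-1) = 2 ^ (θ-1) * δ ^ (θ-1) := Real.mul_rpow (by norm_num) hδ0.le
        _ ≤ 1 * δ ^ (θ-1) := by
            have h2le : (2:ℝ) ^ (θ-1) ≤ 1 :=
              Real.rpow_le_one_of_one_le_of_nonpos (by norm_num) hθn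
            have := Real.rpow_nonneg hδ0.le (θ-1)
            nlinarith
        _ = δ ^ (θ-1) := one_mul _
    have hδθ : δ * δ ^ (θ - 1) = δ ^ θ := by
      rw [show δ * δ ^ (θ-1) = δ ^ (1:ℝ) * δ ^ (θ-1) by rw [Real.rpow_one],
        ← Real.rpow_add hδ0]
      ring_nf
    have hT1 : ‖(a - b) * ((r ^ (θ - 1) : ℝ) : ℂ)‖ ≤ δ ^ θ := by
      rw [norm_mul, Complex.norm_real, Real.norm_eq_abs,
        abs_of_nonneg (Real.rpow_nonneg ha0.le _)]
      have : r ^ (θ-1) ≤ δ ^ (θ-1) :=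
        le_trans (Real.rpow_le_rpow_of_nonpos (by linarith) ha2δ hθn) hpow2δ
      calc δ * r ^ (θ-1) ≤ δ * δ ^ (θ-1) := by nlinarith
        _ = δ ^ θ := hδθ
    have hT2 : ‖b * (((r ^ (θ - 1) : ℝ) : ℂ) - ((s ^ (θ - 1) : ℝ) : ℂ))‖ ≤ δ ^ θ := by
      rw [norm_mul]
      rw [show ((r ^ (θ - 1) : ℝ) : ℂ) - ((s ^ (θ - 1) : ℝ) : ℂ)
          = (((r ^ (θ - 1) - s ^ (θ - 1) : ℝ)) : ℂ) by push_cast; ring]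
      rw [Complex.norm_real, Real.norm_eq_abs]
      have hrs : r ^ (θ-1) ≤ s ^ (θ-1) := Real.rpow_le_rpow_of_nonpos hb0 hba hθn
      rw [abs_of_nonpos (by linarith), neg_sub]
      -- key estimate : s * (s^(θ-1) - r^(θ-1)) ≤ s^(θ-1) * (r - s)
      have hu1 : (1:ℝ) ≤ r / s := (one_le_div hb0).mpr hba
      have hru : r = s * (r / s) := by field_simp
      have hrpow : r ^ (θ-1) = s ^ (θ-1) * (r/s) ^ (θ-1) := by
        conv_lhs => rw [hru]
        exact Real.mul_rpow hb0.le (by positivity)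
      have huinv : (r/s)⁻¹ ≤ (r/s) ^ (θ-1) := by
        have := Real.rpow_le_rpow_of_exponent_le hu1 (show (-1:ℝ) ≤ θ-1 by linarith)
        rwa [Real.rpow_neg_one] at this
      have hu0 : (0:ℝ) < r / s := by positivity
      have hkey : s * (s ^ (θ-1) - r ^ (θ-1)) ≤ s ^ (θ-1) * (r - s) := by
        rw [hrpow]
        have h1 : 1 - (r/s) ^ (θ-1) ≤ (r/s) - 1 := by
          have h2 : 1 - (r/s)⁻¹ ≤ (r/s) - 1 := by
            have := mul_inv_cancel₀ hu0.ne'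
            nlinarith [sq_nonneg (r/s - 1)]
          linarith
        have hs1 : (0:ℝ) ≤ s ^ (θ-1) := Real.rpow_nonneg hb0.le _
        have : s * (s ^ (θ-1) - s ^ (θ-1) * (r/s) ^ (θ-1))
            = s ^ (θ-1) * (s * (1 - (r/s) ^ (θ-1))) := by ring
        rw [this]
        have h3 : s * (1 - (r/s) ^ (θ-1)) ≤ s * ((r/s) - 1) := by nlinarith
        have h4 : s * ((r/s) - 1) = r - s := by field_simp
        nlinarith
      have hspow : s ^ (θ-1) ≤ δ ^ (θ-1) :=
        le_trans (Real.rpow_le_rpow_of_nonpos (by linarith) hB.le hθn) hpow2δ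
      have hrsδ : r - s ≤ δ := by
        have := norm_sub_norm_le a b
        simpa using this
      calc s * (s ^ (θ-1) - r ^ (θ-1)) ≤ s ^ (θ-1) * (r - s) := hkey
        _ ≤ δ ^ (θ-1) * δ := by
            have h5 : (0:ℝ) ≤ r - s := by linarith
            have h6 : (0:ℝ) ≤ s ^ (θ-1) := Real.rpow_nonneg hb0.le _
            have h7 : (0:ℝ) ≤ δ ^ (θ-1) := Real.rpow_nonneg hδ0.le _
            nlinarith
        _ = δ ^ θ := by rw [mul_comm]; exact hδθ
    calc ‖Mz θ a - Mz θ b‖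
        ≤ ‖(a - b) * ((r ^ (θ - 1) : ℝ) : ℂ)‖
          + ‖b * (((r ^ (θ - 1) : ℝ) : ℂ) - ((s ^ (θ - 1) : ℝ) : ℂ))‖ := by
            rw [hdecomp]; exact norm_add_le _ _
      _ ≤ δ ^ θ + δ ^ θ := add_le_add hT1 hT2
      _ ≤ 5 * δ ^ θ := by linarith

lemma Mz_diff_le {θ : ℝ} (hθ0 : 0 < θ) (hθ1 : θ ≤ 1) (a b : ℂ) :
    ‖Mz θ a - Mz θ b‖ ≤ 5 * ‖a - b‖ ^ θ := by
  rcases le_total ‖b‖ ‖a‖ with h | h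
  · exact Mz_diff_le_aux hθ0 hθ1 h
  · calc ‖Mz θ a - Mz θ b‖ = ‖Mz θ b - Mz θ a‖ := norm_sub_rev _ _
      _ ≤ 5 * ‖b - a‖ ^ θ := Mz_diff_le_aux hθ0 hθ1 h
      _ = 5 * ‖a - b‖ ^ θ := by rw [norm_sub_rev]



lemma finite_of_summable {X : Type*} {g : X → ℝ} (hg : Summable g) {t : ℝ} (ht : 0 < t) :
    {x | t ≤ g x}.Finite := by
  have h2 : ∀ᶠ x in Filter.cofinite, g x < t :=
    hg.tendsto_cofinite_zero.eventually_lt_const ht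
  have h3 : {x | ¬ g x < t}.Finite := Filter.eventually_cofinite.mp h2
  exact h3.subset (fun x hx => by simpa [not_lt] using hx)

lemma lp_norm_mono {X : Type*} {p q : ℝ} (hp : 0 < p) (hpq : p ≤ q)
    (u : lp (fun _ : X => ℂ) (ENNReal.ofReal p)) (v : lp (fun _ : X => ℂ) (ENNReal.ofReal q))
    (huv : ∀ x, (v : ∀ _ : X, ℂ) x = (u : ∀ _ : X, ℂ) x) : ‖v‖ ≤ ‖u‖ := by
  have hq : 0 < q := lt_of_lt_of_le hp hpq
  have htp : (ENNReal.ofReal p).toReal = p := toReal_ofReal hp.le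
  have htq : (ENNReal.ofReal q).toReal = q := toReal_ofReal hq.le
  have htp' : 0 < (ENNReal.ofReal p).toReal := by rw [htp]; exact hp
  have htq' : 0 < (ENNReal.ofReal q).toReal := by rw [htq]; exact hq
  have hPne : (ENNReal.ofReal p) ≠ 0 := by
    simp only [ne_eq, ENNReal.ofReal_eq_zero, not_le]; exact hp
  have hsumv : Summable fun x => ‖(v : ∀ _ : X, ℂ) x‖ ^ q := by
    have := (lp.memℓp v).summable htq'; rwa [htq] at this
  have hsumu : Summable fun x => ‖(u : ∀ _ : X, ℂ) x‖ ^ p := by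
    have := (lp.memℓp u).summable htp'; rwa [htp] at this
  have hterm : ∀ x, ‖(v : ∀ _ : X, ℂ) x‖ ^ q ≤ ‖u‖ ^ (q - p) * ‖(u : ∀ _ : X, ℂ) x‖ ^ p := by
    intro x
    rw [huv x]
    have hux : ‖(u : ∀ _ : X, ℂ) x‖ ≤ ‖u‖ := lp.norm_apply_le_norm hPne u x
    calc ‖(u : ∀ _ : X, ℂ) x‖ ^ q = ‖(u : ∀ _ : X, ℂ) x‖ ^ ((q - p) + p) := by ring_nf
      _ = ‖(u : ∀ _ : X, ℂ) x‖ ^ (q-p) * ‖(u : ∀ _ : X, ℂ) x‖ ^ p :=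
          Real.rpow_add' (norm_nonneg _) (by linarith)
      _ ≤ ‖u‖ ^ (q-p) * ‖(u : ∀ _ : X, ℂ) x‖ ^ p := by
          have := Real.rpow_le_rpow (norm_nonneg _) hux (by linarith : (0:ℝ) ≤ q - p)
          have h0 : (0:ℝ) ≤ ‖(u : ∀ _ : X, ℂ) x‖ ^ p := Real.rpow_nonneg (norm_nonneg _) _
          nlinarith
  have hvq : ‖v‖ ^ q ≤ ‖u‖ ^ q := by
    have h1 : ‖v‖ ^ q = ∑' x, ‖(v : ∀ _ : X, ℂ) x‖ ^ q := by
      have := lp.norm_rpow_eq_tsum htq' v; rwa [htq] at this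
    have h2 : ‖u‖ ^ p = ∑' x, ‖(u : ∀ _ : X, ℂ) x‖ ^ p := by
      have := lp.norm_rpow_eq_tsum htp' u; rwa [htp] at this
    rw [h1]
    calc (∑' x, ‖(v : ∀ _ : X, ℂ) x‖ ^ q)
        ≤ ∑' x, ‖u‖ ^ (q - p) * ‖(u : ∀ _ : X, ℂ) x‖ ^ p :=
          Summable.tsum_le_tsum hterm hsumv (hsumu.mul_left _)
      _ = ‖u‖ ^ (q - p) * ∑' x, ‖(u : ∀ _ : X, ℂ) x‖ ^ p := tsum_mul_left
      _ = ‖u‖ ^ (q - p) * ‖u‖ ^ p := by rw [h2]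
      _ = ‖u‖ ^ q := by
          rw [← Real.rpow_add' (lp.norm_nonneg' u) (by linarith)]; ring_nf
  exact (Real.rpow_le_rpow_iff (lp.norm_nonneg' v) (lp.norm_nonneg' u) hq).mp hvq


end H1lpAux
open H1lpAux

section CompLaws
variable {G : Type*} [Group G] [TopologicalSpace G] {X : Type*}

lemma seqBL_h_ne (F : SeqBLFamily G X) (g : G) (x : X) : F.h g x ≠ 0 := by
  intro h0
  have := F.habs g x
  rw [h0] at this
  simp at this

lemma seqBL_laws (F : SeqBLFamily G X) (p : ℝ) (hp : 1 ≤ p) :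
    (∀ (g g' : G) (x : X), F.σ (g * g') x = F.σ g' (F.σ g x)) ∧
    (∀ (g g' : G) (x : X), F.h (g * g') x = F.h g x * F.h g' (F.σ g x)) ∧
    (∀ x : X, F.σ 1 x = x) := by
  classical
  set P := ENNReal.ofReal p with hP
  have key : ∀ (g g' : G) (x : X),
      F.σ (g * g') x = F.σ g' (F.σ g x) ∧ F.h (g * g') x = F.h g x * F.h g' (F.σ g x) := by
    intro g g' x
    set z := F.σ g' (F.σ g x) with hz
    set δ : lpSeq X p := lp.single P z (1 : ℂ) with hδ
    have e3 : (F.rep p hp).ρ (g * g') δ = (F.rep p hp).ρ g ((F.rep p hp).ρ g' δ) :=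
      (F.rep p hp).map_mul' g g' δ
    have l : F.h (g * g') x * (δ : ∀ _ : X, ℂ) (F.σ (g * g') x)
        = F.h g x * (F.h g' (F.σ g x) * (δ : ∀ _ : X, ℂ) (F.σ g' (F.σ g x))) := by
      calc F.h (g * g') x * (δ : ∀ _ : X, ℂ) (F.σ (g * g') x)
          = ((F.rep p hp).ρ (g * g') δ : ∀ _ : X, ℂ) x := (F.formula p hp (g * g') δ x).symm
        _ = ((F.rep p hp).ρ g ((F.rep p hp).ρ g' δ) : ∀ _ : X, ℂ) x := by rw [e3]
        _ = F.h g x * (((F.rep p hp).ρ g' δ : ∀ _ : X, ℂ) (F.σ g x)) :=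
            F.formula p hp g ((F.rep p hp).ρ g' δ) x
        _ = F.h g x * (F.h g' (F.σ g x) * (δ : ∀ _ : X, ℂ) (F.σ g' (F.σ g x))) := by
            rw [F.formula p hp g' δ (F.σ g x)]
    have hδz : (δ : ∀ _ : X, ℂ) z = 1 := by rw [hδ]; exact lp.single_apply_self (E := fun _ : X => ℂ) P z (1 : ℂ)
    have hσeq : F.σ (g * g') x = z := by
      by_contra hne'
      have h0 : (δ : ∀ _ : X, ℂ) (F.σ (g * g') x) = 0 := by
        rw [hδ]; exact lp.single_apply_ne (E := fun _ : X => ℂ) P z (1 : ℂ) hne'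
      rw [h0, mul_zero, hδz, mul_one] at l
      exact (mul_ne_zero (seqBL_h_ne F g x) (seqBL_h_ne F g' (F.σ g x))) l.symm
    have hheq : F.h (g * g') x = F.h g x * F.h g' (F.σ g x) := by
      rw [hσeq, hδz, mul_one, mul_one] at l
      exact l
    exact ⟨hσeq, hheq⟩
  refine ⟨fun g g' x => (key g g' x).1, fun g g' x => (key g g' x).2, ?_⟩
  intro x
  set δ : lpSeq X p := lp.single P x (1 : ℂ) with hδ
  have e1 : (F.rep p hp).ρ 1 δ = δ := (F.rep p hp).map_one' δ
  have l : F.h 1 x * (δ : ∀ _ : X, ℂ) (F.σ 1 x) = 1 := by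
    calc F.h 1 x * (δ : ∀ _ : X, ℂ) (F.σ 1 x)
        = ((F.rep p hp).ρ 1 δ : ∀ _ : X, ℂ) x := (F.formula p hp 1 δ x).symm
      _ = (δ : ∀ _ : X, ℂ) x := by rw [e1]
      _ = 1 := by rw [hδ]; exact lp.single_apply_self (E := fun _ : X => ℂ) P x (1 : ℂ)
  by_contra hne'
  have h0 : (δ : ∀ _ : X, ℂ) (F.σ 1 x) = 0 := by
    rw [hδ]; exact lp.single_apply_ne (E := fun _ : X => ℂ) P x (1 : ℂ) hne'
  rw [h0, mul_zero] at l
  exact zero_ne_one l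

end CompLaws

/-- Lemma `lem-lp`. Let `1 ≤ p < q < ∞` and let `π^p` be a (BL)
orthogonal representation on `ℓ_p` without nonzero invariant vectors, with Mazur conjugate
`π^q` and positive part `|π^p|`. If `H¹(G,π^q) = 0` and `H¹(G,|π^p|) = 0`, then
`H¹(G,π^p) = 0`. -/
theorem h1Trivial_of_conjugate_and_positive (G : Type*) [Group G] [TopologicalSpace G]
    [IsTopologicalGroup G]
    {X : Type*} [Countable X]
    (p q : ℝ) (hp : 1 ≤ p) (hpq : p < q)
    (F : SeqBLFamily G X)
    (A : SeqBLFamily G X) (hσA : ∀ g x, A.σ g x = F.σ g x) (hhA : ∀ g x, A.h g x = 1)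
    (hnoinv : ∀ f : lpSeq X p, (∀ g : G, (F.rep p hp).ρ g f = f) → f = 0)
    (h1 : H1Trivial (F.rep q (hp.trans hpq.le)))
    (h2 : H1Trivial (A.rep p hp)) :
    H1Trivial (F.rep p hp) := by
  classical
  have hq : 1 ≤ q := hp.trans hpq.le
  have hp0 : (0:ℝ) < p := lt_of_lt_of_le one_pos hp
  have hq0 : (0:ℝ) < q := lt_of_lt_of_le one_pos hq
  set P := ENNReal.ofReal p with hPdef
  set Qe := ENNReal.ofReal q with hQdef
  have htp : P.toReal = p := ENNReal.toReal_ofReal hp0.le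
  have htq : Qe.toReal = q := ENNReal.toReal_ofReal hq0.le
  have htp' : 0 < P.toReal := by rw [htp]; exact hp0
  have htq' : 0 < Qe.toReal := by rw [htq]; exact hq0
  obtain ⟨hσmul, hhmul, hσone⟩ := seqBL_laws F p hp
  have hhnorm : ∀ (g : G) (x : X), ‖F.h g x‖ = 1 := by
    intro g x; exact F.habs g x
  intro b hb
  obtain ⟨hbc, hbco⟩ := hb
  have hbsum : ∀ v : lpSeq X p, Summable fun x => ‖(v : ∀ _ : X, ℂ) x‖ ^ p := by
    intro v; have := (lp.memℓp v).summable htp'; rwa [htp] at this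
  have hqsum : ∀ v : lpSeq X q, Summable fun x => ‖(v : ∀ _ : X, ℂ) x‖ ^ q := by
    intro v; have := (lp.memℓp v).summable htq'; rwa [htq] at this
  -- Step 1 : `b` is also a cocycle for `π^q`
  have hmemq : ∀ g : G, Memℓp (fun x => (b g : ∀ _ : X, ℂ) x) Qe := by
    intro g
    exact Memℓp.of_exponent_ge (lp.memℓp (b g)) (ENNReal.ofReal_le_ofReal hpq.le)
  set bq : G → lpSeq X q := fun g => ⟨fun x => (b g : ∀ _ : X, ℂ) x, hmemq g⟩ with hbqdef
  have hbq_coord : ∀ (g : G) (x : X), (bq g : ∀ _ : X, ℂ) x = (b g : ∀ _ : X, ℂ) x :=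
    fun g x => rfl
  have hbqcont : NormContinuous bq := by
    intro g₀ ε hε
    filter_upwards [hbc g₀ ε hε] with g hg
    have hcoord : ∀ x : X, ((bq g - bq g₀ : lpSeq X q) : ∀ _ : X, ℂ) x
        = ((b g - b g₀ : lpSeq X p) : ∀ _ : X, ℂ) x := by
      intro x
      simp only [lp.coeFn_sub, Pi.sub_apply, hbq_coord]
    exact lt_of_le_of_lt (lp_norm_mono hp0 hpq.le (b g - b g₀) (bq g - bq g₀) hcoord) hg
  have hbqcoc : ∀ g h' : G, bq (g * h') = bq g + (F.rep q hq).ρ g (bq h') := by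
    intro g h'
    apply lp.ext
    funext x
    have h1 : (b (g * h') : ∀ _ : X, ℂ) x
        = (b g : ∀ _ : X, ℂ) x + F.h g x * (b h' : ∀ _ : X, ℂ) (F.σ g x) := by
      rw [hbco g h', lp.coeFn_add, Pi.add_apply, F.formula p hp g (b h') x]
    calc (bq (g * h') : ∀ _ : X, ℂ) x = (b (g * h') : ∀ _ : X, ℂ) x := rfl
      _ = (b g : ∀ _ : X, ℂ) x + F.h g x * (b h' : ∀ _ : X, ℂ) (F.σ g x) := h1
      _ = ((bq g + (F.rep q hq).ρ g (bq h') : lpSeq X q) : ∀ _ : X, ℂ) x := by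
          rw [lp.coeFn_add, Pi.add_apply, F.formula q hq g (bq h') x, hbq_coord, hbq_coord]
  obtain ⟨f, hf⟩ := h1 bq ⟨hbqcont, hbqcoc⟩
  have hfpt : ∀ (g : G) (x : X),
      (b g : ∀ _ : X, ℂ) x = (f : ∀ _ : X, ℂ) x - F.h g x * (f : ∀ _ : X, ℂ) (F.σ g x) := by
    intro g x
    have h2 : (bq g : ∀ _ : X, ℂ) x
        = ((f - (F.rep q hq).ρ g f : lpSeq X q) : ∀ _ : X, ℂ) x := by rw [← hf g]
    rw [hbq_coord g x, lp.coeFn_sub, Pi.sub_apply, F.formula q hq g f x] at h2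
    exact h2
  -- Step 2 : the Mazur-conjugated cocycle `β`
  set θ : ℝ := p / q with hθdef
  have hθ0 : 0 < θ := div_pos hp0 hq0
  have hθ1 : θ ≤ 1 := by rw [hθdef, div_le_one hq0]; exact hpq.le
  have hθq : θ * q = p := div_mul_cancel₀ p hq0.ne'
  set w : X → ℂ := fun x => Mz θ ((f : ∀ _ : X, ℂ) x) with hwdef
  have hw_shift : ∀ (g : G) (x : X),
      F.h g x * w (F.σ g x) = Mz θ ((f : ∀ _ : X, ℂ) x - (b g : ∀ _ : X, ℂ) x) := by
    intro g x
    have h3 : (f : ∀ _ : X, ℂ) x - (b g : ∀ _ : X, ℂ) x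
        = F.h g x * (f : ∀ _ : X, ℂ) (F.σ g x) := by
      rw [hfpt g x]; ring
    rw [h3, Mz_unim (hhnorm g x)]
  have hptws : ∀ u v : ℂ, ‖Mz θ u - Mz θ v‖ ^ q ≤ 5 ^ q * ‖u - v‖ ^ p := by
    intro u v
    have h4 := Mz_diff_le hθ0 hθ1 u v
    calc ‖Mz θ u - Mz θ v‖ ^ q ≤ (5 * ‖u - v‖ ^ θ) ^ q :=
        Real.rpow_le_rpow (norm_nonneg _) h4 hq0.le
      _ = 5 ^ q * (‖u - v‖ ^ θ) ^ q :=
        Real.mul_rpow (by norm_num) (Real.rpow_nonneg (norm_nonneg _) _)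
      _ = 5 ^ q * ‖u - v‖ ^ (θ * q) := by rw [← Real.rpow_mul (norm_nonneg _)]
      _ = 5 ^ q * ‖u - v‖ ^ p := by rw [hθq]
  have hβmem : ∀ g : G, Memℓp (fun x => w x - F.h g x * w (F.σ g x)) Qe := by
    intro g
    apply memℓp_gen
    have hle : ∀ x : X, ‖w x - F.h g x * w (F.σ g x)‖ ^ Qe.toReal
        ≤ 5 ^ q * ‖(b g : ∀ _ : X, ℂ) x‖ ^ p := by
      intro x
      rw [htq, hw_shift g x]
      have h5 := hptws ((f : ∀ _ : X, ℂ) x) ((f : ∀ _ : X, ℂ) x - (b g : ∀ _ : X, ℂ) x)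
      rw [_root_.sub_sub_cancel] at h5
      exact h5
    exact Summable.of_nonneg_of_le (fun x => Real.rpow_nonneg (norm_nonneg _) _) hle
      ((hbsum (b g)).mul_left _)
  set β : G → lpSeq X q := fun g => ⟨fun x => w x - F.h g x * w (F.σ g x), hβmem g⟩ with hβdef
  have hβ_coord : ∀ (g : G) (x : X),
      (β g : ∀ _ : X, ℂ) x = w x - F.h g x * w (F.σ g x) := fun g x => rfl
  have hβcoc : ∀ g h' : G, β (g * h') = β g + (F.rep q hq).ρ g (β h') := by
    intro g h'
    apply lp.ext
    funext x
    rw [lp.coeFn_add, Pi.add_apply, F.formula q hq g (β h') x]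
    rw [hβ_coord, hβ_coord, hβ_coord]
    rw [hσmul g h' x, hhmul g h' x]
    ring
  have hβest : ∀ g g₀ : G, ‖β g - β g₀‖ ^ q ≤ 5 ^ q * ‖b g - b g₀‖ ^ p := by
    intro g g₀
    have h6 : ‖β g - β g₀‖ ^ q = ∑' x, ‖((β g - β g₀ : lpSeq X q) : ∀ _ : X, ℂ) x‖ ^ q := by
      have := lp.norm_rpow_eq_tsum htq' (β g - β g₀); rwa [htq] at this
    have h7 : ‖b g - b g₀‖ ^ p = ∑' x, ‖((b g - b g₀ : lpSeq X p) : ∀ _ : X, ℂ) x‖ ^ p := by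
      have := lp.norm_rpow_eq_tsum htp' (b g - b g₀); rwa [htp] at this
    rw [h6, h7, ← tsum_mul_left]
    refine Summable.tsum_le_tsum ?_ (hqsum (β g - β g₀)) ((hbsum (b g - b g₀)).mul_left _)
    intro x
    rw [lp.coeFn_sub, Pi.sub_apply, lp.coeFn_sub, Pi.sub_apply, hβ_coord g x, hβ_coord g₀ x,
      hw_shift g x, hw_shift g₀ x]
    have h8 := hptws ((f : ∀ _ : X, ℂ) x - (b g₀ : ∀ _ : X, ℂ) x)
      ((f : ∀ _ : X, ℂ) x - (b g : ∀ _ : X, ℂ) x)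
    have h9 : ((f : ∀ _ : X, ℂ) x - (b g₀ : ∀ _ : X, ℂ) x)
        - ((f : ∀ _ : X, ℂ) x - (b g : ∀ _ : X, ℂ) x)
        = (b g : ∀ _ : X, ℂ) x - (b g₀ : ∀ _ : X, ℂ) x := by ring
    rw [h9] at h8
    have h10 : (w x - Mz θ ((f : ∀ _ : X, ℂ) x - (b g : ∀ _ : X, ℂ) x))
        - (w x - Mz θ ((f : ∀ _ : X, ℂ) x - (b g₀ : ∀ _ : X, ℂ) x))
        = Mz θ ((f : ∀ _ : X, ℂ) x - (b g₀ : ∀ _ : X, ℂ) x)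
          - Mz θ ((f : ∀ _ : X, ℂ) x - (b g : ∀ _ : X, ℂ) x) := by ring
    rw [h10]
    exact h8
  have hβcont : NormContinuous β := by
    intro g₀ ε hε
    have h5q : (0:ℝ) < 5 ^ q := Real.rpow_pos_of_pos (by norm_num) q
    set δ : ℝ := (ε ^ q / 5 ^ q) ^ (1/p) with hδdef
    have hδpos : 0 < δ := Real.rpow_pos_of_pos (div_pos (Real.rpow_pos_of_pos hε q) h5q) _
    filter_upwards [hbc g₀ δ hδpos] with g hg
    have h13 : δ ^ p = ε ^ q / 5 ^ q := by
      rw [hδdef, ← Real.rpow_mul (by positivity), one_div, inv_mul_cancel₀ hp0.ne',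
        Real.rpow_one]
    have h11 : ‖β g - β g₀‖ ^ q < ε ^ q := by
      have h12 : ‖b g - b g₀‖ ^ p < δ ^ p :=
        Real.rpow_lt_rpow (lp.norm_nonneg' _) hg hp0
      calc ‖β g - β g₀‖ ^ q ≤ 5 ^ q * ‖b g - b g₀‖ ^ p := hβest g g₀
        _ < 5 ^ q * δ ^ p := (mul_lt_mul_iff_right₀ h5q).mpr h12
        _ = ε ^ q := by rw [h13]; field_simp
    by_contra hcon
    push_neg at hcon
    have := Real.rpow_le_rpow hε.le hcon hq0.le
    linarith
  obtain ⟨w', hw'⟩ := h1 β ⟨hβcont, hβcoc⟩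
  -- Step 3 : `w - w'` is pointwise invariant, hence zero
  set d : X → ℂ := fun x => w x - (w' : ∀ _ : X, ℂ) x with hddef
  have hdinv : ∀ (g : G) (x : X), d x = F.h g x * d (F.σ g x) := by
    intro g x
    have h14 : (β g : ∀ _ : X, ℂ) x
        = ((w' - (F.rep q hq).ρ g w' : lpSeq X q) : ∀ _ : X, ℂ) x := by rw [← hw' g]
    rw [hβ_coord g x, lp.coeFn_sub, Pi.sub_apply, F.formula q hq g w' x] at h14
    have h15 : F.h g x * d (F.σ g x)
        = F.h g x * w (F.σ g x) - F.h g x * (w' : ∀ _ : X, ℂ) (F.σ g x) := by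
      have : d (F.σ g x) = w (F.σ g x) - (w' : ∀ _ : X, ℂ) (F.σ g x) := rfl
      rw [this]; ring
    rw [h15]
    have h16 : d x = w x - (w' : ∀ _ : X, ℂ) x := rfl
    rw [h16]
    linear_combination h14
  have hdzero : ∀ x : X, d x = 0 := by
    intro x₀
    set O : Set X := Set.range (fun g : G => F.σ g x₀) with hOdef
    have hx₀O : x₀ ∈ O := Set.mem_range.mpr ⟨1, hσone x₀⟩
    have hfwd : ∀ (g : G) (y : X), y ∈ O → F.σ g y ∈ O := by
      intro g y hy
      obtain ⟨g', rfl⟩ := hy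
      exact Set.mem_range.mpr ⟨g' * g, hσmul g' g x₀⟩
    have hback : ∀ (g : G) (y : X), F.σ g y ∈ O → y ∈ O := by
      intro g y hy
      have hgg : g * g⁻¹ = 1 := by group
      have h17 := hσmul g g⁻¹ y
      rw [hgg, hσone y] at h17
      rw [h17]
      exact hfwd g⁻¹ _ hy
    have habsconst : ∀ y ∈ O, ‖d y‖ = ‖d x₀‖ := by
      intro y hy
      obtain ⟨g, rfl⟩ := hy
      conv_rhs => rw [hdinv g x₀]
      rw [norm_mul, hhnorm g x₀, one_mul]
    by_cases hfin : O.Finite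
    · have hmeme : Memℓp (fun y => if y ∈ O then d y else 0) P := by
        apply memℓp_gen
        apply summable_of_ne_finset_zero (s := hfin.toFinset)
        intro y hy
        rw [Set.Finite.mem_toFinset] at hy
        rw [if_neg hy, norm_zero, Real.zero_rpow (by rw [htp]; exact hp0.ne')]
      set E : lpSeq X p := ⟨fun y => if y ∈ O then d y else 0, hmeme⟩ with hEdef
      have hEc : ∀ z : X, (E : ∀ _ : X, ℂ) z = if z ∈ O then d z else 0 := fun _ => rfl
      have hEinv : ∀ g : G, (F.rep p hp).ρ g E = E := by
        intro g
        apply lp.ext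
        funext y
        rw [F.formula p hp g E y, hEc, hEc]
        by_cases hyO : y ∈ O
        · rw [if_pos hyO, if_pos (hfwd g y hyO), ← hdinv g y]
        · rw [if_neg hyO, if_neg (fun hc => hyO (hback g y hc)), mul_zero]
      have hE0 := hnoinv E hEinv
      have h18 : (E : ∀ _ : X, ℂ) x₀ = 0 := by rw [hE0]; rfl
      rw [hEc x₀, if_pos hx₀O] at h18
      exact h18
    · by_contra hne
      set c := ‖d x₀‖ with hcdef
      have hc : 0 < c := norm_pos_iff.mpr hne
      have hS1 : {y : X | c/2 ≤ ‖w y‖}.Finite := by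
        have hsub : {y : X | c/2 ≤ ‖w y‖}
            ⊆ {y : X | (c/2) ^ (q/θ) ≤ ‖(f : ∀ _ : X, ℂ) y‖ ^ q} := by
          intro y hy
          simp only [Set.mem_setOf_eq] at hy ⊢
          have h19 : ‖w y‖ = ‖(f : ∀ _ : X, ℂ) y‖ ^ θ := Mz_norm hθ0 _
          have h20 := Real.rpow_le_rpow (by positivity) (h19 ▸ hy)
            (by positivity : (0:ℝ) ≤ q/θ)
          rwa [← Real.rpow_mul (norm_nonneg _),
            show θ * (q/θ) = q by field_simp] at h20
        exact (finite_of_summable (hqsum f) (by positivity)).subset hsub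
      have hS2 : {y : X | c/2 ≤ ‖(w' : ∀ _ : X, ℂ) y‖}.Finite := by
        have hsub : {y : X | c/2 ≤ ‖(w' : ∀ _ : X, ℂ) y‖}
            ⊆ {y : X | (c/2) ^ q ≤ ‖(w' : ∀ _ : X, ℂ) y‖ ^ q} := by
          intro y hy
          simp only [Set.mem_setOf_eq] at hy ⊢
          exact Real.rpow_le_rpow (by positivity) hy hq0.le
        exact (finite_of_summable (hqsum w') (by positivity)).subset hsub
      have hOsub : O ⊆ {y : X | c/2 ≤ ‖w y‖} ∪ {y : X | c/2 ≤ ‖(w' : ∀ _ : X, ℂ) y‖} := by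
        intro y hyO
        have h21 : c = ‖d y‖ := (habsconst y hyO).symm
        have h22 : ‖d y‖ ≤ ‖w y‖ + ‖(w' : ∀ _ : X, ℂ) y‖ := norm_sub_le _ _
        by_contra hcon
        simp only [Set.mem_union, Set.mem_setOf_eq, not_or, not_le] at hcon
        obtain ⟨hA, hB⟩ := hcon
        rw [← h21] at h22
        linarith
      exact hfin ((hS1.union hS2).subset hOsub)
  -- Step 4 : conclude `f ∈ ℓ_p`
  have hww' : ∀ x : X, w x = (w' : ∀ _ : X, ℂ) x := by
    intro x
    have h23 := hdzero x
    have h24 : d x = w x - (w' : ∀ _ : X, ℂ) x := rfl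
    rw [h24] at h23
    exact sub_eq_zero.mp h23
  have h25 : ∀ x : X, ‖(f : ∀ _ : X, ℂ) x‖ ^ p = ‖(w' : ∀ _ : X, ℂ) x‖ ^ q := by
    intro x
    rw [← hww' x]
    have h26 : ‖w x‖ = ‖(f : ∀ _ : X, ℂ) x‖ ^ θ := Mz_norm hθ0 _
    rw [h26, ← Real.rpow_mul (norm_nonneg _), hθq]
  have hfmem : Memℓp (fun x => (f : ∀ _ : X, ℂ) x) P := by
    apply memℓp_gen
    have h27 : Summable fun x => ‖(f : ∀ _ : X, ℂ) x‖ ^ p :=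
      (hqsum w').congr fun x => (h25 x).symm
    rw [htp]
    exact h27
  refine ⟨⟨fun x => (f : ∀ _ : X, ℂ) x, hfmem⟩, fun g => ?_⟩
  apply lp.ext
  funext x
  rw [lp.coeFn_sub, Pi.sub_apply, F.formula p hp g _ x]
  exact hfpt g x


end
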